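/- Let φ : ℝ^d → ℝ be a convex, Lipschitz continuous function with Lipschitz constant Lip(φ), and for α > 0 let Σ_α = {x ∈ ℝ^d : diam(∂φ(x)) ≥ α}. Then there exists a constant c_d depending only on the dimension d such that for all R > 0 and α > 0, the (d−1)-dimensional Hausdorff measure satisfies H^{d−1}(Σ_α ∩ B(0,R)) ≤ c_d · Lip(φ) · R^{d−1}/α. -/

import Mathlib

open Metric Set MeasureTheory
open scoped ENNReal NNReal

/-- The subdifferential of `φ` at `x`. -/
def subdiff {d : ℕ} (φ : EuclideanSpace ℝ (Fin d) → ℝ) (x : EuclideanSpace ℝ (Fin d)) :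
    Set (EuclideanSpace ℝ (Fin d)) :=
  {g | ∀ y, φ x + (inner ℝ g (y - x) : ℝ) ≤ φ y}

section Aux

variable {d n : ℕ} {φ : EuclideanSpace ℝ (Fin d) → ℝ} {L : NNReal}

lemma subdiff_mono {x x' g g' : EuclideanSpace ℝ (Fin d)}
    (hg : g ∈ subdiff φ x) (hg' : g' ∈ subdiff φ x') :
    0 ≤ (inner ℝ (g - g') (x - x') : ℝ) := by
  have h1 := hg x'
  have h2 := hg' x
  have e1 : (inner ℝ g (x' - x) : ℝ) = -(inner ℝ g (x - x') : ℝ) := by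
    rw [← inner_neg_right, neg_sub]
  have e2 : (inner ℝ (g - g') (x - x') : ℝ) = (inner ℝ g (x - x') : ℝ) - (inner ℝ g' (x - x') : ℝ) :=
    inner_sub_left _ _ _
  linarith

lemma subdiff_norm_le (hL : LipschitzWith L φ) {x g : EuclideanSpace ℝ (Fin d)}
    (hg : g ∈ subdiff φ x) : ‖g‖ ≤ L := by
  have h1 := hg (x + g)
  rw [add_sub_cancel_left, real_inner_self_eq_norm_sq] at h1
  have h2 : φ (x + g) - φ x ≤ L * ‖g‖ := by
    have hd := hL.dist_le_mul (x + g) x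
    rw [Real.dist_eq, dist_eq_norm, add_sub_cancel_left] at hd
    exact le_trans (le_abs_self _) hd
  rcases eq_or_lt_of_le (norm_nonneg g) with h0 | h0
  · rw [← h0]; exact L.coe_nonneg
  · nlinarith

lemma subdiff_comb {x g g' : EuclideanSpace ℝ (Fin d)} {t : ℝ}
    (hg : g ∈ subdiff φ x) (hg' : g' ∈ subdiff φ x) (ht0 : 0 ≤ t) (ht1 : t ≤ 1) :
    (1 - t) • g + t • g' ∈ subdiff φ x := by
  intro y
  have h1 := hg y
  have h2 := hg' y
  have e : (inner ℝ ((1 - t) • g + t • g') (y - x) : ℝ)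
      = (1 - t) * (inner ℝ g (y - x) : ℝ) + t * (inner ℝ g' (y - x) : ℝ) := by
    rw [inner_add_left, real_inner_smul_left, real_inner_smul_left]
  nlinarith

lemma key_dist {x x' g g' : EuclideanSpace ℝ (Fin d)}
    (hg : g ∈ subdiff φ x) (hg' : g' ∈ subdiff φ x') {lam : ℝ} (hlam : 0 ≤ lam) :
    ‖x - x'‖ ≤ ‖(x + lam • g) - (x' + lam • g')‖ := by
  set z := x + lam • g
  set z' := x' + lam • g'
  have e : z - z' = (x - x') + lam • (g - g') := by
    simp only [z, z', smul_sub]; abel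
  have h1 : ‖x - x'‖ ^ 2 ≤ (inner ℝ (z - z') (x - x') : ℝ) := by
    rw [e, inner_add_left, real_inner_smul_left, real_inner_self_eq_norm_sq]
    nlinarith [subdiff_mono hg hg']
  have h2 : (inner ℝ (z - z') (x - x') : ℝ) ≤ ‖z - z'‖ * ‖x - x'‖ :=
    real_inner_le_norm _ _
  rcases eq_or_lt_of_le (norm_nonneg (x - x')) with h0 | h0
  · rw [← h0]; exact norm_nonneg _
  · nlinarith

lemma coord_le_norm (v : EuclideanSpace ℝ (Fin n)) (i : Fin n) : |v i| ≤ ‖v‖ := by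
  rw [EuclideanSpace.norm_eq]
  have h1 : |v i| = Real.sqrt (‖v i‖ ^ 2) := by
    rw [Real.sqrt_sq_eq_abs, Real.norm_eq_abs, abs_abs]
  rw [h1]
  apply Real.sqrt_le_sqrt
  exact Finset.single_le_sum (f := fun j => ‖v j‖ ^ 2) (fun j _ => by positivity) (Finset.mem_univ i)

lemma exists_big_coord (v : EuclideanSpace ℝ (Fin (n+1))) :
    ∃ i, ‖v‖ ≤ ((n : ℝ) + 1) * |v i| := by
  obtain ⟨i, -, hi⟩ := Finset.exists_max_image Finset.univ (fun j => |v j|)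
    ⟨0, Finset.mem_univ 0⟩
  refine ⟨i, ?_⟩
  rw [EuclideanSpace.norm_eq]
  have h1 : ∑ j, ‖v j‖ ^ 2 ≤ (((n : ℝ) + 1) * |v i|) ^ 2 := by
    have h2 : ∑ j, ‖v j‖ ^ 2 ≤ ∑ _j : Fin (n+1), |v i| ^ 2 := by
      apply Finset.sum_le_sum
      intro j _
      rw [Real.norm_eq_abs]
      exact pow_le_pow_left₀ (abs_nonneg _) (hi j (Finset.mem_univ j)) 2
    rw [Finset.sum_const, Finset.card_univ, Fintype.card_fin] at h2
    have h3 : ((n:ℝ)+1) * |v i| ^ 2 ≤ (((n : ℝ) + 1) * |v i|) ^ 2 := by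
      nlinarith [abs_nonneg (v i)]
    calc ∑ j, ‖v j‖ ^ 2 ≤ (n+1) • (|v i| ^ 2) := h2
      _ = ((n:ℝ)+1) * |v i| ^ 2 := by push_cast [nsmul_eq_mul]; ring
      _ ≤ _ := h3
  calc Real.sqrt (∑ j, ‖v j‖ ^ 2) ≤ Real.sqrt ((((n : ℝ) + 1) * |v i|) ^ 2) :=
        Real.sqrt_le_sqrt h1
    _ = ((n : ℝ) + 1) * |v i| := Real.sqrt_sq (by positivity)

noncomputable def emb {n : ℕ} (i : Fin (n+1)) (c : ℝ) (w : Fin n → ℝ) :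
    EuclideanSpace ℝ (Fin (n+1)) :=
  (WithLp.equiv 2 (Fin (n+1) → ℝ)).symm (i.insertNth c w)

lemma emb_lipschitz (i : Fin (n+1)) (c : ℝ) :
    LipschitzWith ((n : NNReal) + 1) (emb (n := n) i c) := by
  apply LipschitzWith.of_dist_le_mul
  intro w w'
  rw [dist_eq_norm, dist_eq_norm]
  have hcoord : ∀ j, (emb i c w - emb i c w') j
      = Fin.insertNth (α := fun _ => ℝ) i c w j - Fin.insertNth (α := fun _ => ℝ) i c w' j := by
    intro j; rfl
  rw [EuclideanSpace.norm_eq]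
  have key : ∑ j, ‖(emb i c w - emb i c w') j‖ ^ 2 ≤ ((((n : NNReal) + 1) : ℝ) * ‖w - w'‖) ^ 2 := by
    rw [Fin.sum_univ_succAbove _ i]
    have h0 : ‖(emb i c w - emb i c w') i‖ ^ 2 = 0 := by
      rw [hcoord, Fin.insertNth_apply_same, Fin.insertNth_apply_same, sub_self, norm_zero]
      norm_num
    rw [h0, zero_add]
    have hterm : ∀ k : Fin n, ‖(emb i c w - emb i c w') (i.succAbove k)‖ ^ 2 ≤ ‖w - w'‖ ^ 2 := by
      intro k
      rw [hcoord, Fin.insertNth_apply_succAbove, Fin.insertNth_apply_succAbove]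
      have hk : w k - w' k = (w - w') k := rfl
      rw [hk]
      have h1 : ‖(w - w') k‖ ≤ ‖w - w'‖ := norm_le_pi_norm (w - w') k
      nlinarith [norm_nonneg ((w-w') k), norm_nonneg (w - w')]
    calc ∑ k : Fin n, ‖(emb i c w - emb i c w') (i.succAbove k)‖ ^ 2
        ≤ ∑ _k : Fin n, ‖w - w'‖ ^ 2 := Finset.sum_le_sum fun k _ => hterm k
      _ = (n : ℝ) * ‖w - w'‖ ^ 2 := by
          rw [Finset.sum_const, Finset.card_univ, Fintype.card_fin, nsmul_eq_mul]
      _ ≤ ((((n : NNReal) + 1) : ℝ) * ‖w - w'‖) ^ 2 := by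
          push_cast
          nlinarith [norm_nonneg (w - w'), sq_nonneg ‖w - w'‖]
  calc Real.sqrt (∑ j, ‖(emb i c w - emb i c w') j‖ ^ 2)
      ≤ Real.sqrt (((((n : NNReal) + 1) : ℝ) * ‖w - w'‖) ^ 2) := Real.sqrt_le_sqrt key
    _ = (((n : NNReal) + 1) : ℝ) * ‖w - w'‖ := Real.sqrt_sq (by positivity)

lemma emb_surj (i : Fin (n+1)) (c : ℝ) (z : EuclideanSpace ℝ (Fin (n+1))) (hz : z i = c)
    {r : ℝ} (hr : ‖z‖ ≤ r) :
    z ∈ emb i c '' (closedBall (0 : Fin n → ℝ) r) := by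
  refine ⟨i.removeNth z, ?_, ?_⟩
  · rw [mem_closedBall_zero_iff]
    have hrn : 0 ≤ r := le_trans (norm_nonneg z) hr
    rw [pi_norm_le_iff_of_nonneg hrn]
    intro k
    calc ‖i.removeNth z k‖ = |z (i.succAbove k)| := rfl
      _ ≤ ‖z‖ := coord_le_norm z _
      _ ≤ r := hr
  · show (WithLp.equiv 2 (Fin (n+1) → ℝ)).symm (i.insertNth c (i.removeNth z)) = z
    rw [← hz]
    exact congrArg _ (Fin.insertNth_self_removeNth i z)


lemma grid_hit {a b h₀ : ℝ} (hh : 0 < h₀) (hab : a + h₀ ≤ b) :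
    ∃ m : ℤ, (m:ℝ) * h₀ ∈ Set.Icc a b := by
  refine ⟨⌈a / h₀⌉, ?_, ?_⟩
  · have h1 : a / h₀ ≤ (⌈a / h₀⌉ : ℝ) := Int.le_ceil _
    rw [div_le_iff₀ hh] at h1
    linarith
  · have h2 : (⌈a / h₀⌉ : ℝ) < a / h₀ + 1 := Int.ceil_lt_add_one _
    have h3 : (⌈a / h₀⌉ : ℝ) * h₀ < (a / h₀ + 1) * h₀ := by
      exact mul_lt_mul_of_pos_right h2 hh
    have h4 : (a / h₀ + 1) * h₀ = a + h₀ := by field_simp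
    linarith

lemma final_real {n : ℕ} {D q R' Mr : ℝ} (hD : (1:ℝ) ≤ D) (hq : 0 < q) (hR : 0 < R')
    (hM0 : 0 ≤ Mr) (hM1 : Mr ≤ 4*D*q + 1) (h2q : 1 ≤ 2*q) :
    (D*(2*Mr+1)) * (D^n * (4*R')^n)
      ≤ ((D * (8*D+6) + 1) * (D+1)^(n+1) * 4^(n+1)) * q * R'^n := by
  have hD0 : (0:ℝ) < D := lt_of_lt_of_le one_pos hD
  have hstep : 2*Mr+1 ≤ (8*D+6)*q := by nlinarith
  have hK : D*(8*D+6)*D^n*4^n ≤ (D*(8*D+6)+1)*(D+1)^(n+1)*4^(n+1) := by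
    have hDn : (0:ℝ) ≤ D := hD0.le
    have k2 : D^n ≤ (D+1)^(n+1) := by
      calc D^n ≤ (D+1)^n := pow_le_pow_left₀ hDn (by linarith) n
        _ ≤ (D+1)^(n+1) := pow_le_pow_right₀ (by linarith) (Nat.le_succ n)
    have k3 : (4:ℝ)^n ≤ 4^(n+1) := pow_le_pow_right₀ (by norm_num) (Nat.le_succ n)
    have k1 : D*(8*D+6) ≤ D*(8*D+6)+1 := by linarith
    have p1 : (0:ℝ) ≤ D^n := pow_nonneg hDn n
    have p2 : (0:ℝ) ≤ (4:ℝ)^n := pow_nonneg (by norm_num) n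
    have p3 : (0:ℝ) ≤ D*(8*D+6)+1 := by nlinarith
    have p4 : (0:ℝ) ≤ (D+1)^(n+1) := pow_nonneg (by linarith) _
    exact mul_le_mul (mul_le_mul k1 k2 p1 p3) k3 p2 (mul_nonneg p3 p4)
  have hRn : (0:ℝ) ≤ R'^n := pow_nonneg hR.le n
  calc (D*(2*Mr+1)) * (D^n * (4*R')^n)
      = (2*Mr+1) * (D * D^n * (4^n * R'^n)) := by rw [mul_pow]; ring
    _ ≤ ((8*D+6)*q) * (D * D^n * (4^n * R'^n)) := by
        apply mul_le_mul_of_nonneg_right hstep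
        have h5 : (0:ℝ) ≤ 4^n * R'^n := mul_nonneg (pow_nonneg (by norm_num) n) hRn
        exact mul_nonneg (mul_nonneg hD0.le (pow_nonneg hD0.le n)) h5
    _ = (D*(8*D+6)*D^n*4^n) * (q * R'^n) := by ring
    _ ≤ ((D*(8*D+6)+1)*(D+1)^(n+1)*4^(n+1)) * (q * R'^n) :=
        mul_le_mul_of_nonneg_right hK (mul_nonneg hq.le hRn)
    _ = ((D * (8*D+6) + 1) * (D+1)^(n+1) * 4^(n+1)) * q * R'^n := by ring

end Aux

/-- Hausdorff measure bound on the singular set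
`Σ_α = {x : diam(∂φ(x)) ≥ α}` of a convex Lipschitz function:
`H^(d-1)(Σ_α ∩ B(0,R)) ≤ c_d Lip(φ) R^(d-1)/α` for a dimensional constant `c_d`. -/
theorem hausdorff_measure_singular_set (d : ℕ) :
    ∃ c : ℝ, 0 < c ∧
      ∀ (L : NNReal) (φ : EuclideanSpace ℝ (Fin d) → ℝ),
        ConvexOn ℝ Set.univ φ → LipschitzWith L φ →
        ∀ R α : ℝ, 0 < R → 0 < α →
          μH[(d : ℝ) - 1]
              ({x : EuclideanSpace ℝ (Fin d) | α ≤ Metric.diam (subdiff φ x)} ∩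
                closedBall 0 R) ≤
            ENNReal.ofReal (c * (L : ℝ) * R ^ (d - 1) / α) := by
  classical
  rcases d with _ | n
  · -- dimension 0 : the space is a single point and every subdifferential has diameter 0
    refine ⟨1, one_pos, ?_⟩
    intro L φ hconv hL R α hR hα
    have hempty : {x : EuclideanSpace ℝ (Fin 0) | α ≤ Metric.diam (subdiff φ x)} = ∅ := by
      ext x
      simp only [mem_setOf_eq, mem_empty_iff_false, iff_false, not_le]
      have hsub : (subdiff φ x).Subsingleton := fun a _ b _ => Subsingleton.elim a b
      rw [Metric.diam_subsingleton hsub]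
      exact hα
    rw [hempty, empty_inter, measure_empty]
    exact zero_le

  · -- dimension n+1 : the proximal-map covering argument
    refine ⟨(((n:ℝ)+1) * (8*((n:ℝ)+1)+6) + 1) * (((n:ℝ)+1)+1)^(n+1) * 4^(n+1), by positivity, ?_⟩
    intro L φ hconv hL R α hR hα
    have hexp : ((n+1 : ℕ) : ℝ) - 1 = (n : ℝ) := by push_cast; ring
    rw [hexp]
    simp only [Nat.add_sub_cancel]
    rcases le_or_gt α (2 * (L:ℝ)) with hαL | hαL
    swap
    · -- α > 2L : the singular set is empty
      have hempty : {x : EuclideanSpace ℝ (Fin (n+1)) | α ≤ Metric.diam (subdiff φ x)} = ∅ := by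
        ext x
        simp only [mem_setOf_eq, mem_empty_iff_false, iff_false, not_le]
        have hsubL : subdiff φ x ⊆ closedBall 0 (L:ℝ) := fun g hg =>
          mem_closedBall_zero_iff.mpr (subdiff_norm_le hL hg)
        calc Metric.diam (subdiff φ x)
            ≤ Metric.diam (closedBall (0 : EuclideanSpace ℝ (Fin (n+1))) (L:ℝ)) :=
              diam_mono hsubL isBounded_closedBall
          _ ≤ 2 * (L:ℝ) := diam_closedBall L.coe_nonneg
          _ < α := hαL
      rw [hempty, empty_inter, measure_empty]
      exact zero_le
    have hL0 : 0 < (L:ℝ) := by linarith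
    set lam : ℝ := R / (L:ℝ) with hlamdef
    have hlam : 0 < lam := div_pos hR hL0
    set h₀ : ℝ := lam * α / (2 * ((n:ℝ)+1)) with hh₀def
    have hh₀ : 0 < h₀ := by rw [hh₀def]; positivity
    set M : ℕ := ⌈4 * ((n:ℝ)+1) * (L:ℝ) / α⌉₊ with hMdef
    set Sig := {x : EuclideanSpace ℝ (Fin (n+1)) | α ≤ Metric.diam (subdiff φ x)} ∩
      closedBall 0 R with hSigdef
    set P : EuclideanSpace ℝ (Fin (n+1)) → EuclideanSpace ℝ (Fin (n+1)) → Prop :=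
      fun z x => x ∈ Sig ∧ ∃ g ∈ subdiff φ x, z = x + lam • g with hPdef
    have Puniq : ∀ z x x', P z x → P z x' → x = x' := by
      rintro z x x' ⟨-, g, hg, rfl⟩ ⟨-, g', hg', hz'⟩
      have hk := key_dist hg hg' hlam.le
      rw [← hz', sub_self, norm_zero] at hk
      exact sub_eq_zero.mp (norm_le_zero_iff.mp hk)
    set S := {z | ∃ x, P z x} with hSdef
    set u : EuclideanSpace ℝ (Fin (n+1)) → EuclideanSpace ℝ (Fin (n+1)) :=
      fun z => if h : ∃ x, P z x then h.choose else 0 with hudef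
    have hu : ∀ z x, P z x → u z = x := by
      intro z x hx
      have hex : ∃ x, P z x := ⟨x, hx⟩
      simp only [hudef, dif_pos hex]
      exact Puniq z _ x hex.choose_spec hx
    have hS2R : ∀ z ∈ S, ‖z‖ ≤ 2 * R := by
      rintro z ⟨x, ⟨⟨-, hxB⟩, g, hg, rfl⟩⟩
      have hgL : ‖g‖ ≤ (L:ℝ) := subdiff_norm_le hL hg
      have hxR : ‖x‖ ≤ R := mem_closedBall_zero_iff.mp hxB
      have hlamL : lam * (L:ℝ) = R := div_mul_cancel₀ R hL0.ne'
      calc ‖x + lam • g‖ ≤ ‖x‖ + ‖lam • g‖ := norm_add_le _ _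
        _ = ‖x‖ + lam * ‖g‖ := by rw [norm_smul, Real.norm_eq_abs, abs_of_pos hlam]
        _ ≤ R + lam * (L:ℝ) := add_le_add hxR (mul_le_mul_of_nonneg_left hgL hlam.le)
        _ = 2 * R := by rw [hlamL]; ring
    have hulip : LipschitzOnWith 1 u S := by
      apply LipschitzOnWith.mk_one
      rintro z hz z' hz'
      obtain ⟨x, hx⟩ := hz
      obtain ⟨x', hx'⟩ := hz'
      rw [hu z x hx, hu z' x' hx', dist_eq_norm, dist_eq_norm]
      obtain ⟨-, g, hg, rfl⟩ := hx
      obtain ⟨-, g', hg', rfl⟩ := hx'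
      exact key_dist hg hg' hlam.le
    set Fset := (Finset.univ : Finset (Fin (n+1))) ×ˢ Finset.Icc (-(M:ℤ)) (M:ℤ) with hFsetdef
    have cover : Sig ⊆ ⋃ p ∈ Fset, u '' (S ∩ {z | z p.1 = (p.2 : ℝ) * h₀}) := by
      rintro x ⟨hxd, hxB⟩
      have hpair : ∃ g ∈ subdiff φ x, ∃ g' ∈ subdiff φ x, α / 2 ≤ ‖g - g'‖ := by
        by_contra hcon
        push_neg at hcon
        have hd2 : Metric.diam (subdiff φ x) ≤ α / 2 := by
          apply diam_le_of_forall_dist_le (by linarith)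
          intro a ha b hb
          rw [dist_eq_norm]
          exact (hcon a ha b hb).le
        have hxd' : α ≤ Metric.diam (subdiff φ x) := hxd
        linarith
      obtain ⟨g, hg, g', hg', hgap⟩ := hpair
      obtain ⟨i, hi⟩ := exists_big_coord (g - g')
      have hiv : (g - g') i = g i - g' i := rfl
      rw [hiv] at hi
      have hgap2 : h₀ ≤ lam * |g i - g' i| := by
        have h1 : α / (2 * ((n:ℝ)+1)) ≤ |g i - g' i| := by
          rw [div_le_iff₀ (by positivity)]
          nlinarith [abs_nonneg (g i - g' i)]
        calc h₀ = lam * (α / (2*((n:ℝ)+1))) := by rw [hh₀def]; ring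
          _ ≤ lam * |g i - g' i| := mul_le_mul_of_nonneg_left h1 hlam.le
      set F : ℝ → ℝ := fun t => x i + lam * ((1 - t) * g i + t * g' i) with hFdef
      have hFc : ContinuousOn F (uIcc 0 1) := Continuous.continuousOn (by fun_prop)
      have hF0 : F 0 = x i + lam * g i := by simp [hFdef]
      have hF1 : F 1 = x i + lam * g' i := by simp [hFdef]
      obtain ⟨m, hm⟩ : ∃ m : ℤ, (m:ℝ) * h₀ ∈ uIcc (F 0) (F 1) := by
        have hlen : h₀ ≤ |F 1 - F 0| := by
          rw [hF0, hF1, show x i + lam * g' i - (x i + lam * g i) = lam * (g' i - g i) from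
            by ring, abs_mul, abs_of_pos hlam, abs_sub_comm]
          exact hgap2
        rcases le_total (F 0) (F 1) with hle | hle
        · rw [uIcc_of_le hle]
          rw [abs_of_nonneg (by linarith)] at hlen
          exact grid_hit hh₀ (by linarith)
        · rw [uIcc_of_ge hle]
          rw [abs_of_nonpos (by linarith)] at hlen
          exact grid_hit hh₀ (by linarith)
      obtain ⟨t, ht, hFt⟩ := intermediate_value_uIcc hFc hm
      rw [uIcc_of_le zero_le_one] at ht
      have hgtmem : (1 - t) • g + t • g' ∈ subdiff φ x := subdiff_comb hg hg' ht.1 ht.2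
      set gc := (1 - t) • g + t • g' with hgcdef
      set z := x + lam • gc with hzdef
      have hzi : z i = (m:ℝ) * h₀ := by
        have h1 : z i = x i + lam * ((1-t) * g i + t * g' i) := rfl
        rw [h1]
        exact hFt
      have hPzx : P z x := ⟨⟨hxd, hxB⟩, gc, hgtmem, hzdef⟩
      have hzS : z ∈ S := ⟨x, hPzx⟩
      have hzn : ‖z‖ ≤ 2 * R := hS2R z hzS
      have hm2 : m ∈ Finset.Icc (-(M:ℤ)) (M:ℤ) := by
        rw [Finset.mem_Icc, ← abs_le]
        have habs : |(m:ℝ)| * h₀ ≤ 2 * R := by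
          rw [← abs_of_pos hh₀, ← abs_mul, ← hzi]
          exact (coord_le_norm z i).trans hzn
        have hratio : 2 * R / h₀ = 4 * ((n:ℝ)+1) * (L:ℝ) / α := by
          rw [hh₀def, hlamdef]
          field_simp
          ring
        have h4 : |(m:ℝ)| ≤ 4*((n:ℝ)+1)*(L:ℝ)/α := by
          rw [← hratio, le_div_iff₀ hh₀]
          exact habs
        have h5 : |(m:ℝ)| ≤ (M:ℝ) := h4.trans (Nat.le_ceil _)
        exact_mod_cast h5
      exact mem_iUnion₂.mpr ⟨(i, m), Finset.mem_product.mpr ⟨Finset.mem_univ i, hm2⟩,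
        ⟨z, ⟨hzS, hzi⟩, hu z x hPzx⟩⟩
    have hexp0 : (0:ℝ) ≤ (n:ℝ) := Nat.cast_nonneg n
    have hpi : (μH[(n:ℝ)] : Measure (Fin n → ℝ)) = volume := by
      simpa using (hausdorffMeasure_pi_real (ι := Fin n))
    have hterm : ∀ p : Fin (n+1) × ℤ,
        μH[(n:ℝ)] (u '' (S ∩ {z | z p.1 = (p.2 : ℝ) * h₀}))
          ≤ (((n:NNReal) + 1 : ℝ≥0∞)) ^ (n:ℝ) * ENNReal.ofReal (4*R) ^ n := by
      intro p
      have h1 : μH[(n:ℝ)] (u '' (S ∩ {z | z p.1 = (p.2:ℝ)*h₀}))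
          ≤ μH[(n:ℝ)] (S ∩ {z | z p.1 = (p.2:ℝ)*h₀}) := by
        have hsub0 : S ∩ {z | z p.1 = (p.2:ℝ)*h₀} ⊆ S := inter_subset_left
        have := (hulip.mono hsub0).hausdorffMeasure_image_le hexp0
        simpa using this
      have hsub : S ∩ {z | z p.1 = (p.2:ℝ)*h₀} ⊆ emb p.1 ((p.2:ℝ)*h₀) '' closedBall 0 (2*R) := by
        rintro z ⟨hzS, hzi⟩
        exact emb_surj p.1 _ z hzi (hS2R z hzS)
      have h3 := (emb_lipschitz p.1 ((p.2:ℝ)*h₀)).hausdorffMeasure_image_le hexp0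
        (closedBall 0 (2*R))
      have h4 : μH[(n:ℝ)] (closedBall (0 : Fin n → ℝ) (2*R)) ≤ ENNReal.ofReal (4*R) ^ n := by
        rw [hpi]
        have hsub2 : closedBall (0 : Fin n → ℝ) (2*R) ⊆
            Set.Icc (fun _ => -(2*R)) (fun _ => 2*R) := by
          intro w hw
          rw [mem_closedBall_zero_iff] at hw
          constructor <;> intro k
          · show -(2*R) ≤ w k
            have hnk := norm_le_pi_norm w k
            rw [Real.norm_eq_abs] at hnk
            have h5 : |w k| ≤ 2*R := le_trans hnk hw
            linarith [(abs_le.mp h5).1]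
          · show w k ≤ 2*R
            have hnk := norm_le_pi_norm w k
            rw [Real.norm_eq_abs] at hnk
            have h5 : |w k| ≤ 2*R := le_trans hnk hw
            exact (abs_le.mp h5).2
        calc volume (closedBall (0:Fin n → ℝ) (2*R))
            ≤ volume (Set.Icc (fun _ => -(2*R)) (fun _ => (2*R : ℝ))) := measure_mono hsub2
          _ = ∏ _i : Fin n, ENNReal.ofReal ((2*R) - (-(2*R))) := Real.volume_Icc_pi
          _ = ENNReal.ofReal (4*R) ^ n := by
              rw [Finset.prod_const, Finset.card_univ, Fintype.card_fin,
                show (2*R) - (-(2*R)) = 4*R from by ring]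
      calc μH[(n:ℝ)] (u '' (S ∩ {z | z p.1 = (p.2:ℝ)*h₀}))
          ≤ μH[(n:ℝ)] (S ∩ {z | z p.1 = (p.2:ℝ)*h₀}) := h1
        _ ≤ μH[(n:ℝ)] (emb p.1 ((p.2:ℝ)*h₀) '' closedBall 0 (2*R)) := measure_mono hsub
        _ ≤ (((n:NNReal)+1 : ℝ≥0∞))^(n:ℝ) * μH[(n:ℝ)] (closedBall (0 : Fin n → ℝ) (2*R)) := h3
        _ ≤ (((n:NNReal)+1 : ℝ≥0∞))^(n:ℝ) * ENNReal.ofReal (4*R) ^ n :=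
            mul_le_mul_right h4 _
    have hcard : Fset.card = (n+1) * (2*M+1) := by
      rw [hFsetdef, Finset.card_product, Finset.card_univ, Fintype.card_fin, Int.card_Icc]
      congr 1
      omega
    have hchain : μH[(n:ℝ)] Sig ≤
        ((((n+1) * (2*M+1) : ℕ)) : ℝ≥0∞) *
          ((((n:NNReal)+1 : ℝ≥0∞))^(n:ℝ) * ENNReal.ofReal (4*R) ^ n) := by
      calc μH[(n:ℝ)] Sig
          ≤ μH[(n:ℝ)] (⋃ p ∈ Fset, u '' (S ∩ {z | z p.1 = (p.2:ℝ)*h₀})) := measure_mono cover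
        _ ≤ ∑ p ∈ Fset, μH[(n:ℝ)] (u '' (S ∩ {z | z p.1 = (p.2:ℝ)*h₀})) :=
            measure_biUnion_finset_le _ _
        _ ≤ ∑ _p ∈ Fset, (((n:NNReal)+1 : ℝ≥0∞))^(n:ℝ) * ENNReal.ofReal (4*R) ^ n :=
            Finset.sum_le_sum fun p _ => hterm p
        _ = _ := by
            rw [Finset.sum_const, nsmul_eq_mul, hcard]
    -- convert the bound to `ofReal` of a real number
    have e1 : (((n:NNReal)+1 : ℝ≥0∞))^(n:ℝ) = ENNReal.ofReal (((n:ℝ)+1)^n) := by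
      rw [ENNReal.rpow_natCast, ENNReal.ofReal_pow (by positivity)]
      congr 1
      rw [ENNReal.ofReal_add (Nat.cast_nonneg n) zero_le_one, ENNReal.ofReal_one,
        ENNReal.ofReal_natCast]
      norm_cast
    have e2 : ENNReal.ofReal (4*R) ^ n = ENNReal.ofReal ((4*R)^n) :=
      (ENNReal.ofReal_pow (by positivity) n).symm
    have e3 : ((((n+1) * (2*M+1) : ℕ)) : ℝ≥0∞)
        = ENNReal.ofReal ((((n+1) * (2*M+1) : ℕ)) : ℝ) := (ENNReal.ofReal_natCast _).symm
    rw [e1, e2, e3, ← ENNReal.ofReal_mul (by positivity), ← ENNReal.ofReal_mul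
      (by positivity)] at hchain
    refine hchain.trans (ENNReal.ofReal_le_ofReal ?_)
    -- the remaining real inequality
    have hq : 0 < (L:ℝ)/α := div_pos hL0 hα
    have hM1 : (M:ℝ) ≤ 4*((n:ℝ)+1)*((L:ℝ)/α) + 1 := by
      have hc := Nat.ceil_lt_add_one (show (0:ℝ) ≤ 4 * ((n:ℝ)+1) * (L:ℝ) / α by positivity)
      have harg : 4*((n:ℝ)+1)*(L:ℝ)/α = 4*((n:ℝ)+1)*((L:ℝ)/α) := by ring
      rw [hMdef]
      linarith [harg ▸ hc]
    have h2q : 1 ≤ 2*((L:ℝ)/α) := by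
      rw [show (2:ℝ)*((L:ℝ)/α) = 2*(L:ℝ)/α from by ring, le_div_iff₀ hα]
      linarith
    have hfin := final_real (n := n) (D := (n:ℝ)+1) (show (1:ℝ) ≤ (n:ℝ)+1 by
        have := Nat.cast_nonneg (α := ℝ) n; linarith) hq hR (Nat.cast_nonneg M) hM1 h2q
    calc ((((n+1) * (2*M+1) : ℕ)) : ℝ) * (((n:ℝ)+1)^n * (4*R)^n)
        = (((n:ℝ)+1)*(2*(M:ℝ)+1)) * (((n:ℝ)+1)^n * (4*R)^n) := by push_cast; ring
      _ ≤ ((((n:ℝ)+1) * (8*((n:ℝ)+1)+6) + 1) * (((n:ℝ)+1)+1)^(n+1) * 4^(n+1)) *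
            ((L:ℝ)/α) * R^n := hfin
      _ = (((n:ℝ)+1) * (8*((n:ℝ)+1)+6) + 1) * (((n:ℝ)+1)+1)^(n+1) * 4^(n+1) *
            (L:ℝ) * R^n / α := by ring
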